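/- For any word w over Δ, the image φ(Q,w) intersects Q_i nontrivially for every i = 1,…,n if and only if there exists some j ∈ {1,…,n} such that φ(Q,w) intersects Q_j nontrivially. -/

import Mathlib

/-- The transition function of a DFA extended to words (read left to right). -/
def deltaStar {Q A : Type} (δ : Q → A → Q) (q : Q) (w : List A) : Q :=
  w.foldl δ q

/-- `w` is a reset word for the DFA with transition function `δ`. -/
def IsReset {Q A : Type} (δ : Q → A → Q) (w : List A) : Prop :=
  ∀ q q' : Q, deltaStar δ q w = deltaStar δ q' w

/-- The set of reset words of a DFA. -/
def Syn {Q A : Type} (δ : Q → A → Q) : Set (List A) :=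
  {w | IsReset δ w}

/-- The alphabet Δ = Σ ∪ {x,y,z}: `Sum.inl a` is a letter of Σ, and
`Sum.inr 0`, `Sum.inr 1`, `Sum.inr 2` are the new letters x, y, z. -/
abbrev Alph (σ : Type) : Type := σ ⊕ Fin 3

def xL {σ : Type} : Alph σ := Sum.inr 0
def yL {σ : Type} : Alph σ := Sum.inr 1
def zL {σ : Type} : Alph σ := Sum.inr 2

/-- The state set Q of the DFA 𝒜: the disjoint union of the state sets `Qst i`
of the DFAs `M i`, together with two new states: `Sum.inr false` is the sink `s`
and `Sum.inr true` is the state `h`. -/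
abbrev StA {n : ℕ} (Qst : Fin n → Type) : Type := (Σ i, Qst i) ⊕ Bool

def sA {n : ℕ} {Qst : Fin n → Type} : StA Qst := Sum.inr false
def hA {n : ℕ} {Qst : Fin n → Type} : StA Qst := Sum.inr true

/-- The transition function φ of the DFA 𝒜. -/
def phi {n : ℕ} {σ : Type} {Qst : Fin n → Type}
    (δi : ∀ i, Qst i → σ → Qst i) (qinit : ∀ i, Qst i)
    (Fi : ∀ i, Set (Qst i)) [∀ i, DecidablePred (· ∈ Fi i)] :
    StA Qst → Alph σ → StA Qst
  | Sum.inl ⟨i, q⟩, Sum.inl a => Sum.inl ⟨i, δi i q a⟩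
  | Sum.inl ⟨i, q⟩, Sum.inr k =>
      if k = 0 then Sum.inl ⟨i, qinit i⟩          -- φ(q, x) = qᵢ
      else if k = 1 then sA                        -- φ(q, y) = s
      else if q ∈ Fi i then sA else hA             -- φ(q, z) = s on Fᵢ, h off Fᵢ
  | Sum.inr _, _ => sA                             -- φ(s,·) = φ(h,·) = s

/-- The language accepted by the DFA `M i = ⟨Qst i, σ, δi i, qinit i, Fi i⟩`. -/
def LM {n : ℕ} {σ : Type} {Qst : Fin n → Type}
    (δi : ∀ i, Qst i → σ → Qst i) (qinit : ∀ i, Qst i)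
    (Fi : ∀ i, Set (Qst i)) (i : Fin n) : Set (List σ) :=
  {w | deltaStar (δi i) (qinit i) w ∈ Fi i}

/-- φ(Q,w) meets every Qᵢ iff it meets some Q_j. -/
theorem image_meets_all_iff_meets_some
    (n : ℕ) (hn : 0 < n) (σ : Type) [Fintype σ]
    (Qst : Fin n → Type) [∀ i, Fintype (Qst i)]
    (δi : ∀ i, Qst i → σ → Qst i) (qinit : ∀ i, Qst i)
    (Fi : ∀ i, Set (Qst i)) [∀ i, DecidablePred (· ∈ Fi i)]
    (hno : ∀ i (q : Qst i) (a : σ), δi i q a ≠ qinit i)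
    (hqF : ∀ i, qinit i ∉ Fi i)
    (w : List (Alph σ)) :
    (∀ i : Fin n, ∃ (q : StA Qst) (p : Qst i),
        deltaStar (phi δi qinit Fi) q w = Sum.inl ⟨i, p⟩) ↔
    (∃ (j : Fin n) (q : StA Qst) (p : Qst j),
        deltaStar (phi δi qinit Fi) q w = Sum.inl ⟨j, p⟩) := by
  have sink : ∀ (v : List (Alph σ)) (b : Bool), ∃ b' : Bool,
      deltaStar (phi δi qinit Fi) (Sum.inr b) v = Sum.inr b' := by
    intro v
    induction v with
    | nil => intro b; exact ⟨b, rfl⟩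
    | cons c v ih =>
      intro b
      have : deltaStar (phi δi qinit Fi) (Sum.inr b) (c :: v)
          = deltaStar (phi δi qinit Fi) (phi δi qinit Fi (Sum.inr b) c) v := rfl
      rw [this]
      have hc : phi δi qinit Fi (Sum.inr b) c = Sum.inr false := rfl
      rw [hc]; exact ih false
  have safe_stays : ∀ (v : List (Alph σ)),
      (∀ c ∈ v, c ≠ (yL : Alph σ) ∧ c ≠ (zL : Alph σ)) →
      ∀ (i : Fin n) (q : Qst i), ∃ p : Qst i,
        deltaStar (phi δi qinit Fi) (Sum.inl ⟨i, q⟩) v = Sum.inl ⟨i, p⟩ := by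
    intro v
    induction v with
    | nil => intro _ i q; exact ⟨q, rfl⟩
    | cons c v ih =>
      intro hs i q
      have hc := hs c List.mem_cons_self
      have hss : ∀ c ∈ v, c ≠ (yL : Alph σ) ∧ c ≠ (zL : Alph σ) :=
        fun c hcv => hs c (List.mem_cons_of_mem _ hcv)
      have hstep : deltaStar (phi δi qinit Fi) (Sum.inl ⟨i, q⟩) (c :: v)
          = deltaStar (phi δi qinit Fi) (phi δi qinit Fi (Sum.inl ⟨i, q⟩) c) v := rfl
      rw [hstep]
      match c with
      | Sum.inl a =>
        have : phi δi qinit Fi (Sum.inl ⟨i, q⟩) (Sum.inl a) = Sum.inl ⟨i, δi i q a⟩ := rfl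
        rw [this]; exact ih hss i (δi i q a)
      | Sum.inr k =>
        have hk0 : k = 0 := by
          fin_cases k
          · rfl
          · exact absurd rfl hc.1
          · exact absurd rfl hc.2
        subst hk0
        have : phi δi qinit Fi (Sum.inl ⟨i, q⟩) (Sum.inr 0) = Sum.inl ⟨i, qinit i⟩ := rfl
        rw [this]; exact ih hss i (qinit i)
  have safe_of : ∀ (v : List (Alph σ)) (q : StA Qst) (j : Fin n) (p : Qst j),
      deltaStar (phi δi qinit Fi) q v = Sum.inl ⟨j, p⟩ →
      ∀ c ∈ v, c ≠ (yL : Alph σ) ∧ c ≠ (zL : Alph σ) := by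
    intro v
    induction v with
    | nil => intro _ _ _ _ c hc; exact absurd hc List.not_mem_nil
    | cons c v ih =>
      intro q j p h d hd
      have hstep : deltaStar (phi δi qinit Fi) q (c :: v)
          = deltaStar (phi δi qinit Fi) (phi δi qinit Fi q c) v := rfl
      rw [hstep] at h
      rcases List.mem_cons.mp hd with rfl | hdv
      · -- d = c : show c is safe
        by_contra hbad
        push_neg at hbad
        have hsunk : ∃ b : Bool, phi δi qinit Fi q d = Sum.inr b := by
          match q, d with
          | Sum.inl ⟨i, r⟩, Sum.inl a =>
            have := hbad (by simp [yL]); simp [zL] at this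
          | Sum.inl ⟨i, r⟩, Sum.inr k =>
            have hk : k = 1 ∨ k = 2 := by
              fin_cases k
              · have := hbad (by simp [yL]); simp [zL] at this
              · exact Or.inl rfl
              · exact Or.inr rfl
            rcases hk with rfl | rfl
            · exact ⟨false, rfl⟩
            · by_cases hr : r ∈ Fi i
              · exact ⟨false, by simp [phi, hr, sA]⟩
              · exact ⟨true, by simp [phi, hr, sA, hA]⟩
          | Sum.inr b, _ => exact ⟨false, rfl⟩
        rcases hsunk with ⟨b, hb⟩
        rw [hb] at h
        rcases sink v b with ⟨b', hb'⟩
        rw [h] at hb'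
        exact Sum.inl_ne_inr hb'
      · exact ih _ j p h d hdv
  constructor
  · intro h
    obtain ⟨i0, _⟩ : ∃ i : Fin n, True := ⟨⟨0, hn⟩, trivial⟩
    exact ⟨i0, h i0⟩
  · rintro ⟨j, q, p, h⟩ i
    have hsafe := safe_of w q j p h
    rcases safe_stays w hsafe i (qinit i) with ⟨p', hp'⟩
    exact ⟨Sum.inl ⟨i, qinit i⟩, p', hp'⟩
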